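/- Let f ∈ C¹(ℝ^k, ℝ^k) satisfy f(u)·u ≥ −C₀ for all u ∈ ℝ^k and f′(u)ξ·ξ ≥ −K|ξ|² for all u, ξ ∈ ℝ^k. Then there exist a sequence of functions f_n ∈ C¹(ℝ^k, ℝ^k) and constants C₀′, K′ ≥ 0 such that: (1) f_n(u)·u ≥ −C₀′ for all u ∈ ℝ^k and all n; (2) f_n′(u)ξ·ξ ≥ −K′|ξ|² for all u, ξ ∈ ℝ^k and all n; (3) f_n → f uniformly on every compact subset of ℝ^k; and (4) for every n there is a finite constant C_n with ‖f_n′(u)‖ ≤ C_n for all u ∈ ℝ^k (i.e. each f_n is globally Lipschitz). -/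

import Mathlib

open Set Filter
open scoped RealInnerProductSpace Topology

set_option maxHeartbeats 1600000 in
theorem yosida_aux {E : Type*} [NormedAddCommGroup E] [InnerProductSpace ℝ E]
    [FiniteDimensional ℝ E]
    (f : E → E) (K : ℝ) (hK : 0 ≤ K) (hf : ContDiff ℝ 1 f)
    (hmon : ∀ v ξ, -(K * ‖ξ‖ ^ 2) ≤ ⟪fderiv ℝ f v ξ, ξ⟫)
    (lam : ℝ) (hl0 : 0 < lam) (hl1 : lam ≤ 1) :
    ∃ J : E → E,
      ContDiff ℝ 1 (f ∘ J) ∧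
      (∀ x, J (x + lam • (f x + K • x)) = x) ∧
      (∀ u, J u + lam • (f (J u) + K • J u) = u) ∧
      (∀ u u', ‖J u - J u'‖ ≤ ‖u - u'‖) ∧
      (∀ u ξ, -((K * (1 + K)) * ‖ξ‖ ^ 2) ≤ ⟪fderiv ℝ (f ∘ J) u ξ, ξ⟫) ∧
      (∀ u, ‖fderiv ℝ (f ∘ J) u‖ ≤ (2 + K) / lam) := by
  classical
  set G : E → E := fun x => x + lam • (f x + K • x) with hG
  have hdiff : Differentiable ℝ f := hf.differentiable one_ne_zero
  set T : E → E →L[ℝ] E :=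
    fun x => ContinuousLinearMap.id ℝ E + lam • (fderiv ℝ f x + K • ContinuousLinearMap.id ℝ E)
    with hT
  have hGd : ∀ x, HasFDerivAt G (T x) x := by
    intro x
    exact (hasFDerivAt_id x).add
      (((hdiff x).hasFDerivAt.add ((hasFDerivAt_id x).const_smul K)).const_smul lam)
  have hGc : ContDiff ℝ 1 G :=
    contDiff_id.add ((hf.add (contDiff_id.const_smul K)).const_smul lam)
  have hTapp : ∀ x ξ, T x ξ = ξ + lam • (fderiv ℝ f x ξ + K • ξ) := by
    intro x ξ
    simp [hT, ContinuousLinearMap.add_apply]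
  have hcoer : ∀ x ξ, ‖ξ‖ ^ 2 ≤ ⟪T x ξ, ξ⟫ := by
    intro x ξ
    rw [hTapp]
    rw [inner_add_left, real_inner_smul_left, inner_add_left, real_inner_smul_left,
      real_inner_self_eq_norm_sq]
    nlinarith [hmon x ξ, sq_nonneg ‖ξ‖]
  -- strong monotonicity
  have hsm : ∀ x y, ‖x - y‖ ^ 2 ≤ ⟪G x - G y, x - y⟫ := by
    intro x y
    set φ : ℝ → ℝ := fun t => ⟪G (y + t • (x - y)), x - y⟫ - t * ‖x - y‖ ^ 2 with hφ
    have hder : ∀ t : ℝ, HasDerivAt φ (⟪T (y + t • (x - y)) (x - y), x - y⟫ - ‖x - y‖ ^ 2) t := by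
      intro t
      have hc : HasDerivAt (fun t : ℝ => y + t • (x - y)) (x - y) t := by
        simpa using ((hasDerivAt_id t).smul_const (x - y)).const_add y
      have hGcd : HasDerivAt (fun t : ℝ => G (y + t • (x - y))) (T (y + t • (x - y)) (x - y)) t :=
        (hGd _).comp_hasDerivAt t hc
      have hin : HasDerivAt (fun t : ℝ => ⟪G (y + t • (x - y)), x - y⟫)
          (⟪T (y + t • (x - y)) (x - y), x - y⟫) t := by
        simpa using hGcd.inner ℝ (hasDerivAt_const t (x - y))
      have hmul : HasDerivAt (fun t : ℝ => t * ‖x - y‖ ^ 2) (‖x - y‖ ^ 2) t := by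
        simpa using (hasDerivAt_id t).mul_const (‖x - y‖ ^ 2)
      exact hin.sub hmul
    have hmono : Monotone φ := by
      refine monotone_of_deriv_nonneg (fun t => (hder t).differentiableAt) (fun t => ?_)
      rw [(hder t).deriv]
      have := hcoer (y + t • (x - y)) (x - y)
      linarith
    have h01 := hmono (zero_le_one : (0:ℝ) ≤ 1)
    have e0 : y + (0:ℝ) • (x - y) = y := by rw [zero_smul, add_zero]
    have e1 : y + (1:ℝ) • (x - y) = x := by rw [one_smul]; abel
    simp only [hφ, e0, e1, zero_mul, one_mul] at h01
    rw [inner_sub_left]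
    linarith
  -- anti-Lipschitz and injectivity
  have hal : ∀ x y, ‖x - y‖ ≤ ‖G x - G y‖ := by
    intro x y
    rcases eq_or_ne x y with rfl | hne
    · simp
    · have h1 := hsm x y
      have h2 : ⟪G x - G y, x - y⟫ ≤ ‖G x - G y‖ * ‖x - y‖ := real_inner_le_norm _ _
      have h3 : 0 < ‖x - y‖ := by simpa [sub_eq_zero] using norm_sub_pos_iff.mpr hne
      nlinarith
  have hinj : Function.Injective G := by
    intro x y hxy
    have h := hal x y
    rw [hxy, sub_self, norm_zero] at h
    have : ‖x - y‖ = 0 := le_antisymm h (norm_nonneg _)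
    rwa [norm_eq_zero, sub_eq_zero] at this
  -- the derivative is a linear equivalence
  have hTinj : ∀ x, Function.Injective (T x) := by
    intro x ξ η h
    have h2 := hcoer x (ξ - η)
    rw [map_sub, h, sub_self] at h2
    simp only [inner_zero_left] at h2
    have : ‖ξ - η‖ = 0 := by nlinarith [norm_nonneg (ξ - η)]
    rwa [norm_eq_zero, sub_eq_zero] at this
  set e : E → E ≃L[ℝ] E := fun x =>
    LinearEquiv.toContinuousLinearEquiv
      (LinearEquiv.ofBijective ((T x : E →L[ℝ] E) : E →ₗ[ℝ] E)
        ⟨hTinj x, (LinearMap.injective_iff_surjective).mp (hTinj x)⟩) with he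
  have hecoe : ∀ x, (e x : E →L[ℝ] E) = T x := by
    intro x; ext ξ; rfl
  have hstrict : ∀ x, HasStrictFDerivAt G (e x : E →L[ℝ] E) x := by
    intro x
    exact hGc.contDiffAt.hasStrictFDerivAt' (by rw [hecoe]; exact hGd x) one_ne_zero
  -- G is surjective
  have hopen : IsOpen (Set.range G) :=
    (isOpenMap_of_hasStrictFDerivAt_equiv hstrict).isOpen_range
  have hclosed : IsClosed (Set.range G) := by
    refine IsSeqClosed.isClosed ?_
    intro u p hmem htend
    choose y hy using hmem
    have hcauchy : CauchySeq y := by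
      rw [Metric.cauchySeq_iff]
      have hu : CauchySeq u := htend.cauchySeq
      rw [Metric.cauchySeq_iff] at hu
      intro ε hε
      obtain ⟨N, hN⟩ := hu ε hε
      refine ⟨N, fun m hm n hn => ?_⟩
      have h := hal (y m) (y n)
      rw [hy m, hy n] at h
      calc dist (y m) (y n) = ‖y m - y n‖ := dist_eq_norm _ _
        _ ≤ ‖u m - u n‖ := h
        _ = dist (u m) (u n) := (dist_eq_norm _ _).symm
        _ < ε := hN m hm n hn
    obtain ⟨z, hz⟩ := cauchySeq_tendsto_of_complete hcauchy
    refine ⟨z, ?_⟩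
    have hlim : Tendsto (fun n => G (y n)) atTop (𝓝 (G z)) :=
      (hGc.continuous.continuousAt.tendsto).comp hz
    simp only [hy] at hlim
    exact tendsto_nhds_unique hlim htend
  have hsurj : Function.Surjective G := by
    have hne : (Set.range G).Nonempty := ⟨G 0, 0, rfl⟩
    have hu : Set.range G = Set.univ := IsClopen.eq_univ ⟨hclosed, hopen⟩ hne
    intro u
    have : u ∈ Set.range G := by rw [hu]; trivial
    exact this
  -- the inverse map
  set J : E → E := fun u => (hsurj u).choose with hJ
  have hGJ : ∀ u, G (J u) = u := fun u => (hsurj u).choose_spec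
  have hJG : ∀ x, J (G x) = x := fun x => hinj (hGJ (G x))
  have hev : ∀ x : E, ∀ᶠ z in 𝓝 x, J (G z) = z := fun x => Filter.Eventually.of_forall hJG
  have hJd : ∀ u, HasFDerivAt J (((e (J u)).symm : E →L[ℝ] E)) u := by
    intro u
    have h := ((hstrict (J u)).to_local_left_inverse (hev (J u))).hasFDerivAt
    rwa [hGJ u] at h
  have hJcd : ∀ u, ContDiffAt ℝ 1 J u := by
    intro u
    have hfd : HasFDerivAt G ((e (J u)) : E →L[ℝ] E) (J u) := by
      rw [hecoe]; exact hGd (J u)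
    have hCI := hGc.contDiffAt.to_localInverse hfd one_ne_zero
    have hunique := (hstrict (J u)).localInverse_unique (hev (J u))
    rw [hGJ u] at hCI hunique
    exact hCI.congr_of_eventuallyEq hunique
  have hcomp : ContDiff ℝ 1 (f ∘ J) := by
    rw [contDiff_iff_contDiffAt]
    exact fun u => (hf.contDiffAt).comp u (hJcd u)
  have hfderiv : ∀ u, fderiv ℝ (f ∘ J) u
      = (fderiv ℝ f (J u)).comp (((e (J u)).symm : E →L[ℝ] E)) := by
    intro u
    exact ((hdiff (J u)).hasFDerivAt.comp u (hJd u)).fderiv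
  have hnonexp : ∀ u u', ‖J u - J u'‖ ≤ ‖u - u'‖ := by
    intro u u'
    have h := hal (J u) (J u')
    rwa [hGJ u, hGJ u'] at h
  refine ⟨J, hcomp, hJG, fun u => hGJ u, hnonexp, ?_, ?_⟩
  · intro u ξ
    set x := J u
    set A := fderiv ℝ f x with hA
    set η := ((e x).symm : E →L[ℝ] E) ξ with hη
    have hTη : T x η = ξ := by
      rw [← hecoe x]; exact (e x).apply_symm_apply ξ
    have hξexp : ξ = η + lam • (A η + K • η) := by rw [← hTη, hTapp]
    have hnle : ‖η‖ ≤ ‖ξ‖ := by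
      have h1 : ‖η‖ ^ 2 ≤ ⟪ξ, η⟫ := by have := hcoer x η; rwa [hTη] at this
      have h2 : ⟪ξ, η⟫ ≤ ‖ξ‖ * ‖η‖ := real_inner_le_norm _ _
      nlinarith [norm_nonneg η, norm_nonneg ξ]
    rw [hfderiv u, ContinuousLinearMap.comp_apply]
    have hexp : ⟪A η, ξ⟫ = ⟪A η, η⟫ + lam * (⟪A η, A η⟫ + K * ⟪A η, η⟫) := by
      conv_lhs => rw [hξexp]
      rw [inner_add_right, real_inner_smul_right, inner_add_right, real_inner_smul_right]
    rw [← hη, ← hA]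
    rw [hexp]
    have hm := hmon x η
    rw [← hA] at hm
    have hAA : ⟪A η, A η⟫ = ‖A η‖ ^ 2 := real_inner_self_eq_norm_sq _
    have hsq : ‖η‖ ^ 2 ≤ ‖ξ‖ ^ 2 := pow_le_pow_left₀ (norm_nonneg η) hnle 2
    have hb : 0 ≤ lam * ⟪A η, A η⟫ := by rw [hAA]; positivity
    have hc := mul_le_mul_of_nonneg_left hm (mul_nonneg hl0.le hK)
    have hd : K * ‖η‖ ^ 2 ≤ K * ‖ξ‖ ^ 2 := mul_le_mul_of_nonneg_left hsq hK
    have he2 : lam * (K * (K * ‖η‖ ^ 2)) ≤ K * (K * ‖ξ‖ ^ 2) := by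
      nlinarith [mul_nonneg (mul_nonneg (sub_nonneg.mpr hl1) (mul_nonneg hK hK)) (sq_nonneg ‖η‖),
        mul_le_mul_of_nonneg_left hsq (mul_nonneg hK hK)]
    nlinarith [hm, hb, hc, hd, he2]
  · intro u
    rw [hfderiv u]
    refine ContinuousLinearMap.opNorm_le_bound _ (by positivity) (fun ξ => ?_)
    rw [ContinuousLinearMap.comp_apply]
    set x := J u
    set A := fderiv ℝ f x with hA
    set η := ((e x).symm : E →L[ℝ] E) ξ with hη
    have hTη : T x η = ξ := by
      rw [← hecoe x]; exact (e x).apply_symm_apply ξ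
    have hξexp : ξ = η + lam • (A η + K • η) := by rw [← hTη, hTapp]
    have hnle : ‖η‖ ≤ ‖ξ‖ := by
      have h1 : ‖η‖ ^ 2 ≤ ⟪ξ, η⟫ := by have := hcoer x η; rwa [hTη] at this
      have h2 : ⟪ξ, η⟫ ≤ ‖ξ‖ * ‖η‖ := real_inner_le_norm _ _
      nlinarith [norm_nonneg η, norm_nonneg ξ]
    have hsmu : lam • A η = ξ - η - (lam * K) • η := by
      rw [hξexp]; module
    have hnorm1 : lam * ‖A η‖ = ‖lam • A η‖ := by
      rw [norm_smul, Real.norm_eq_abs, abs_of_pos hl0]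
    have hnorm2 : ‖ξ - η - (lam * K) • η‖ ≤ ‖ξ‖ + ‖η‖ + (lam * K) * ‖η‖ := by
      calc ‖ξ - η - (lam * K) • η‖ ≤ ‖ξ - η‖ + ‖(lam * K) • η‖ := norm_sub_le _ _
        _ ≤ ‖ξ‖ + ‖η‖ + ‖(lam * K) • η‖ := by gcongr; exact norm_sub_le _ _
        _ = ‖ξ‖ + ‖η‖ + (lam * K) * ‖η‖ := by
            rw [norm_smul, Real.norm_eq_abs, abs_of_nonneg (mul_nonneg hl0.le hK)]
    have hfin : lam * ‖A η‖ ≤ (2 + K) * ‖ξ‖ := by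
      rw [hnorm1, hsmu]
      have hz : lam * K * ‖η‖ ≤ K * ‖ξ‖ := by
        nlinarith [mul_le_mul_of_nonneg_left hnle (mul_nonneg hl0.le hK),
          mul_nonneg (mul_nonneg (sub_nonneg.mpr hl1) hK) (norm_nonneg ξ)]
      linarith [hnorm2, hnle]
    rw [div_mul_eq_mul_div, le_div_iff₀ hl0]
    linarith

/-- Lemma 4.1: approximation of a dissipative, quasi-monotone `C¹` nonlinearity by
globally Lipschitz ones satisfying the same structural assumptions uniformly. -/
theorem statement6 (k : ℕ) (hk : 1 ≤ k)
    (f : EuclideanSpace ℝ (Fin k) → EuclideanSpace ℝ (Fin k))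
    (C₀ K : ℝ) (hC₀ : 0 ≤ C₀) (hK : 0 ≤ K)
    (hf : ContDiff ℝ 1 f)
    (hdis : ∀ v, -C₀ ≤ ⟪f v, v⟫)
    (hmon : ∀ v ξ, -(K * ‖ξ‖ ^ 2) ≤ ⟪fderiv ℝ f v ξ, ξ⟫) :
    ∃ (fn : ℕ → EuclideanSpace ℝ (Fin k) → EuclideanSpace ℝ (Fin k)) (C₀' K' : ℝ),
      0 ≤ C₀' ∧ 0 ≤ K' ∧
      (∀ n, ContDiff ℝ 1 (fn n)) ∧
      (∀ n v, -C₀' ≤ ⟪fn n v, v⟫) ∧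
      (∀ n v ξ, -(K' * ‖ξ‖ ^ 2) ≤ ⟪fderiv ℝ (fn n) v ξ, ξ⟫) ∧
      (∀ s : Set (EuclideanSpace ℝ (Fin k)), IsCompact s →
        TendstoUniformlyOn (fun n => fn n) f atTop s) ∧
      (∀ n, ∃ Cn : ℝ, ∀ v, ‖fderiv ℝ (fn n) v‖ ≤ Cn) := by
  classical
  set lam : ℕ → ℝ := fun n => 1 / (n + 1) with hlam
  have hl0 : ∀ n, 0 < lam n := by intro n; positivity
  have hl1 : ∀ n, lam n ≤ 1 := by
    intro n
    rw [hlam]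
    rw [div_le_one (by positivity)]
    have : (0:ℝ) ≤ (n:ℝ) := Nat.cast_nonneg n
    linarith
  have key : ∀ n : ℕ, ∃ J : EuclideanSpace ℝ (Fin k) → EuclideanSpace ℝ (Fin k),
      ContDiff ℝ 1 (f ∘ J) ∧
      (∀ x, J (x + lam n • (f x + K • x)) = x) ∧
      (∀ u, J u + lam n • (f (J u) + K • J u) = u) ∧
      (∀ u u', ‖J u - J u'‖ ≤ ‖u - u'‖) ∧
      (∀ u ξ, -((K * (1 + K)) * ‖ξ‖ ^ 2) ≤ ⟪fderiv ℝ (f ∘ J) u ξ, ξ⟫) ∧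
      (∀ u, ‖fderiv ℝ (f ∘ J) u‖ ≤ (2 + K) / lam n) :=
    fun n => yosida_aux f K hK hf hmon (lam n) (hl0 n) (hl1 n)
  choose J hJc hJl hJr hJn hJm hJb using key
  refine ⟨fun n => f ∘ J n, C₀ * (1 + K), K * (1 + K), by positivity, by positivity,
    hJc, ?_, fun n v ξ => hJm n v ξ, ?_, fun n => ⟨(2 + K) / lam n, hJb n⟩⟩
  · -- dissipativity
    intro n v
    set x := J n v with hx
    have hrec : x + lam n • (f x + K • x) = v := hJr n v
    have : ⟪f x, v⟫ = ⟪f x, x⟫ + lam n * (⟪f x, f x⟫ + K * ⟪f x, x⟫) := by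
      conv_lhs => rw [← hrec]
      rw [inner_add_right, real_inner_smul_right, inner_add_right, real_inner_smul_right]
    show -(C₀ * (1 + K)) ≤ ⟪f x, v⟫
    rw [this]
    have h1 := hdis x
    have h2 : 0 ≤ lam n * ⟪f x, f x⟫ := by
      have : ⟪f x, f x⟫ = ‖f x‖ ^ 2 := real_inner_self_eq_norm_sq _
      rw [this]; positivity
    have h3 : lam n * K * (-C₀) ≤ lam n * K * ⟪f x, x⟫ :=
      mul_le_mul_of_nonneg_left h1 (mul_nonneg (hl0 n).le hK)
    have h4 : lam n * (K * C₀) ≤ K * C₀ :=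
      mul_le_of_le_one_left (by positivity) (hl1 n)
    nlinarith
  · -- uniform convergence on compacts
    intro s hs
    obtain ⟨R, hR⟩ := hs.isBounded.subset_closedBall 0
    set R2 : ℝ := max R 0 + ‖f (0 : EuclideanSpace ℝ (Fin k))‖ with hR2
    have hR2nn : 0 ≤ R2 := by positivity
    have hcb : IsCompact (Metric.closedBall (0 : EuclideanSpace ℝ (Fin k)) R2) :=
      isCompact_closedBall 0 R2
    set h : EuclideanSpace ℝ (Fin k) → EuclideanSpace ℝ (Fin k) :=
      fun x => f x + K • x with hh
    have hhc : Continuous h := hf.continuous.add (continuous_id.const_smul K)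
    obtain ⟨M, hM⟩ := hcb.exists_bound_of_continuousOn hhc.continuousOn
    have hM0 : 0 ≤ M := le_trans (norm_nonneg _) (hM 0 (Metric.mem_closedBall_self hR2nn))
    -- membership facts
    have hJmem : ∀ n, ∀ u ∈ s, J n u ∈ Metric.closedBall (0 : EuclideanSpace ℝ (Fin k)) R2 := by
      intro n u hu
      have hzero : J n (lam n • f 0) = 0 := by
        have := hJl n 0
        simpa using this
      have hd : ‖J n u - 0‖ ≤ ‖u - lam n • f 0‖ := by
        conv_lhs => rw [show (0 : EuclideanSpace ℝ (Fin k)) = J n (lam n • f 0) from hzero.symm]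
        exact hJn n u _
      have hnu : ‖u‖ ≤ R := by
        have := hR hu
        simpa [Metric.mem_closedBall, dist_eq_norm] using this
      have hnl : ‖lam n • f (0 : EuclideanSpace ℝ (Fin k))‖ ≤ ‖f (0 : EuclideanSpace ℝ (Fin k))‖ := by
        rw [norm_smul, Real.norm_eq_abs, abs_of_pos (hl0 n)]
        exact mul_le_of_le_one_left (norm_nonneg _) (hl1 n)
      rw [Metric.mem_closedBall, dist_eq_norm]
      calc ‖J n u - 0‖ ≤ ‖u - lam n • f 0‖ := hd
        _ ≤ ‖u‖ + ‖lam n • f (0 : EuclideanSpace ℝ (Fin k))‖ := norm_sub_le _ _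
        _ ≤ R + ‖f (0 : EuclideanSpace ℝ (Fin k))‖ := by gcongr
        _ ≤ R2 := by rw [hR2]; gcongr; exact le_max_left _ _
    have hsmem : ∀ u ∈ s, u ∈ Metric.closedBall (0 : EuclideanSpace ℝ (Fin k)) R2 := by
      intro u hu
      have hnu : ‖u‖ ≤ R := by
        have := hR hu
        simpa [Metric.mem_closedBall, dist_eq_norm] using this
      rw [Metric.mem_closedBall, dist_eq_norm, sub_zero]
      calc ‖u‖ ≤ R := hnu
        _ ≤ R2 := by rw [hR2]; nlinarith [le_max_left R 0, norm_nonneg (f (0 : EuclideanSpace ℝ (Fin k)))]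
    -- distance estimate
    have hdist : ∀ n, ∀ u ∈ s, ‖u - J n u‖ ≤ lam n * M := by
      intro n u hu
      have hrec := hJr n u
      have h5 : lam n • (f (J n u) + K • J n u) = u - J n u := eq_sub_of_add_eq' hrec
      rw [← h5, norm_smul, Real.norm_eq_abs, abs_of_pos (hl0 n)]
      exact mul_le_mul_of_nonneg_left (hM _ (hJmem n u hu)) (hl0 n).le
    -- uniform continuity of f on the ball
    have hUC := hcb.uniformContinuousOn_of_continuous hf.continuous.continuousOn
    rw [Metric.uniformContinuousOn_iff] at hUC
    rw [Metric.tendstoUniformlyOn_iff]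
    intro ε hε
    obtain ⟨δ, hδ0, hδ⟩ := hUC ε hε
    obtain ⟨N, hN⟩ := exists_nat_gt (M / δ)
    filter_upwards [eventually_ge_atTop N] with n hn
    intro u hu
    have hlamM : lam n * M < δ := by
      have hcast : (N : ℝ) ≤ (n : ℝ) := Nat.cast_le.mpr hn
      have h1 : M / δ < (n : ℝ) + 1 := by linarith
      have h2 : M < δ * ((n : ℝ) + 1) := by
        rw [div_lt_iff₀ hδ0] at h1
        linarith
      rw [hlam]
      rw [div_mul_eq_mul_div, one_mul, div_lt_iff₀ (by positivity)]
      linarith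
    have hdlt : dist u (J n u) < δ := by
      rw [dist_eq_norm]
      exact lt_of_le_of_lt (hdist n u hu) hlamM
    have := hδ u (hsmem u hu) (J n u) (hJmem n u hu) hdlt
    rw [dist_comm] at this
    calc dist (f u) ((fun n => f ∘ J n) n u) = dist (f (J n u)) (f u) := by
          rw [dist_comm]; rfl
      _ < ε := this
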